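/- Let A ⊆ ℝ^d be a finite set, k ∈ {1,…,d}, and set h(k,d) = max{d+1, 2(k+1)}. If for every subset B ⊆ A with |B| ≤ h(k,d) the lineality space of pos B has dimension at most k, then the lineality space of pos A has dimension at most k. -/

import Mathlib

open scoped RealInnerProductSpace

/-- The conical hull (set of nonnegative combinations) of a set `V` in `ℝ^d`. -/
def posHull {d : ℕ} (V : Set (EuclideanSpace ℝ (Fin d))) : Set (EuclideanSpace ℝ (Fin d)) :=
  {x | ∃ (s : Finset (EuclideanSpace ℝ (Fin d))) (c : EuclideanSpace ℝ (Fin d) → ℝ),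
    ↑s ⊆ V ∧ (∀ v ∈ s, 0 ≤ c v) ∧ x = ∑ v ∈ s, c v • v}

namespace LinHelly

open Module Submodule Finset

variable {d : ℕ}

local notation "E" => EuclideanSpace ℝ (Fin d)

noncomputable local instance : DecidableEq (EuclideanSpace ℝ (Fin d)) := Classical.decEq _

lemma zero_mem_posHull (A : Set E) : (0:E) ∈ posHull A :=
  ⟨∅, 0, by simp, by simp, by simp⟩

lemma mem_posHull_of_mem {A : Set E} {a : E} (ha : a ∈ A) : a ∈ posHull A :=
  ⟨{a}, fun _ => 1, by simpa using ha, by simp, by simp⟩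

lemma add_mem_posHull {A : Set E} {x y : E} (hx : x ∈ posHull A) (hy : y ∈ posHull A) :
    x + y ∈ posHull A := by
  classical
  obtain ⟨s, c, hs, hc, rfl⟩ := hx
  obtain ⟨t, e, ht, he, rfl⟩ := hy
  refine ⟨s ∪ t, fun v => (if v ∈ s then c v else 0) + (if v ∈ t then e v else 0), ?_, ?_, ?_⟩
  · push_cast
    exact Set.union_subset hs ht
  · intro v _
    dsimp only
    have h1 : (0:ℝ) ≤ if v ∈ s then c v else 0 := by
      split
      · exact hc v ‹_›
      · exact le_refl 0
    have h2 : (0:ℝ) ≤ if v ∈ t then e v else 0 := by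
      split
      · exact he v ‹_›
      · exact le_refl 0
    exact add_nonneg h1 h2
  · have key : ∀ (u : Finset E) (f : E → ℝ),
        ∑ v ∈ s ∪ t, (if v ∈ u then f v else 0) • v = ∑ v ∈ (s ∪ t) ∩ u, f v • v := by
      intro u f
      rw [← Finset.sum_ite_mem (s ∪ t) u (fun v => f v • v)]
      exact Finset.sum_congr rfl (fun v _ => by rw [ite_smul, zero_smul])
    dsimp only
    simp only [add_smul, Finset.sum_add_distrib]
    rw [key s c, key t e, Finset.union_inter_cancel_left, Finset.union_inter_cancel_right]

lemma smul_mem_posHull {A : Set E} {x : E} {r : ℝ} (hr : 0 ≤ r) (hx : x ∈ posHull A) :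
    r • x ∈ posHull A := by
  obtain ⟨s, c, hs, hc, rfl⟩ := hx
  exact ⟨s, fun v => r * c v, hs, fun v hv => mul_nonneg hr (hc v hv),
    by rw [Finset.smul_sum]; exact Finset.sum_congr rfl fun v _ => (mul_smul r (c v) v).symm⟩

lemma posHull_mono {A B : Set E} (h : A ⊆ B) : posHull A ⊆ posHull B := by
  rintro x ⟨s, c, hs, hc, rfl⟩
  exact ⟨s, c, hs.trans h, hc, rfl⟩

lemma sum_mem_posHull {A : Set E} {ι : Type*} (s : Finset ι) (f : ι → E) (c : ι → ℝ)
    (hc : ∀ i ∈ s, 0 ≤ c i) (hf : ∀ i ∈ s, f i ∈ posHull A) :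
    (∑ i ∈ s, c i • f i) ∈ posHull A := by
  classical
  induction s using Finset.induction_on with
  | empty => simpa using zero_mem_posHull A
  | @insert a s' hni ih =>
    rw [Finset.sum_insert hni]
    exact add_mem_posHull
      (smul_mem_posHull (hc a (Finset.mem_insert_self a s')) (hf a (Finset.mem_insert_self a s')))
      (ih (fun i hi => hc i (Finset.mem_insert_of_mem hi))
          (fun i hi => hf i (Finset.mem_insert_of_mem hi)))

lemma exists_coeffs {S : Finset E} {x : E} (hx : x ∈ posHull (↑S : Set E)) :
    ∃ c : E → ℝ, (∀ v ∈ S, 0 ≤ c v) ∧ x = ∑ v ∈ S, c v • v := by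
  classical
  obtain ⟨s, c, hs, hc, rfl⟩ := hx
  have hsS : s ⊆ S := Finset.coe_subset.mp hs
  refine ⟨fun v => if v ∈ s then c v else 0, ?_, ?_⟩
  · intro v _
    dsimp only
    split
    · exact hc v ‹_›
    · exact le_refl 0
  · have : ∀ v ∈ S, (if v ∈ s then c v else 0) • v = if v ∈ s then c v • v else 0 :=
      fun v _ => by rw [ite_smul, zero_smul]
    rw [Finset.sum_congr rfl this, Finset.sum_ite_mem S s (fun v => c v • v),
      Finset.inter_eq_right.mpr hsS]

lemma posHull_subset_span (A : Set E) : posHull A ⊆ (span ℝ A : Set E) := by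
  rintro x ⟨s, c, hs, _, rfl⟩
  exact Submodule.sum_mem _ fun v hv => Submodule.smul_mem _ _ (subset_span (hs hv))

end LinHelly

namespace LinHelly
open Module Submodule Finset
variable {d : ℕ}
local notation "E" => EuclideanSpace ℝ (Fin d)
noncomputable local instance : DecidableEq (EuclideanSpace ℝ (Fin d)) := Classical.decEq _

lemma neg_mem_posHull_of_dep {S : Finset E} {δ : E → ℝ} (hpos : ∀ v ∈ S, 0 < δ v)
    (hdep : ∑ v ∈ S, δ v • v = 0) {t : E} (ht : t ∈ S) :
    -t ∈ posHull (↑S : Set E) := by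
  classical
  have h1 : ∑ v ∈ S.erase t, δ v • v + δ t • t = 0 := by
    rw [Finset.sum_erase_add S _ ht]; exact hdep
  have h2 : ∑ v ∈ S.erase t, δ v • v = -(δ t • t) := by
    rw [eq_neg_iff_add_eq_zero]; exact h1
  have hδt : δ t ≠ 0 := ne_of_gt (hpos t ht)
  have h3 : -t = ∑ v ∈ S.erase t, ((δ t)⁻¹ * δ v) • v := by
    have h4 : ∑ v ∈ S.erase t, ((δ t)⁻¹ * δ v) • v = (δ t)⁻¹ • ∑ v ∈ S.erase t, δ v • v := by
      rw [Finset.smul_sum]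
      exact Finset.sum_congr rfl fun v _ => (mul_smul _ _ _)
    rw [h4, h2, smul_neg, smul_smul, inv_mul_cancel₀ hδt, one_smul]
  rw [h3]
  exact sum_mem_posHull _ _ _
    (fun v hv => mul_nonneg (inv_nonneg.mpr (le_of_lt (hpos t ht)))
      (le_of_lt (hpos v (Finset.mem_of_mem_erase hv))))
    (fun v hv => mem_posHull_of_mem (Finset.mem_of_mem_erase hv))

lemma span_subset_posHull {S : Finset E} {δ : E → ℝ} (hpos : ∀ v ∈ S, 0 < δ v)
    (hdep : ∑ v ∈ S, δ v • v = 0) :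
    ∀ x ∈ span ℝ (↑S : Set E), x ∈ posHull (↑S : Set E) := by
  intro x hx
  obtain ⟨f, -, hf⟩ := mem_span_finset.mp hx
  have hx2 : x = (∑ v ∈ S, (max (f v) 0) • v) + ∑ v ∈ S, (max (-f v) 0) • (-v) := by
    rw [← hf, ← Finset.sum_add_distrib]
    refine Finset.sum_congr rfl fun v _ => ?_
    rw [smul_neg, ← sub_eq_add_neg, ← sub_smul]
    congr 1
    rcases le_total (f v) 0 with h | h
    · rw [max_eq_right h, max_eq_left (by linarith)]; ring
    · rw [max_eq_left h, max_eq_right (by linarith)]; ring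
  rw [hx2]
  exact add_mem_posHull
    (sum_mem_posHull _ _ _ (fun v _ => le_max_right _ _)
      (fun v hv => mem_posHull_of_mem hv))
    (sum_mem_posHull _ _ _ (fun v _ => le_max_right _ _)
      (fun v hv => neg_mem_posHull_of_dep hpos hdep hv))

lemma mem_span_erase_of_dep {S : Finset E} {δ : E → ℝ} (hpos : ∀ v ∈ S, 0 < δ v)
    (hdep : ∑ v ∈ S, δ v • v = 0) {t : E} (ht : t ∈ S) :
    t ∈ span ℝ (↑(S.erase t) : Set E) := by
  classical
  have h1 : ∑ v ∈ S.erase t, δ v • v + δ t • t = 0 := by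
    rw [Finset.sum_erase_add S _ ht]; exact hdep
  have hδt : δ t ≠ 0 := ne_of_gt (hpos t ht)
  have h3 : t = (-(δ t)⁻¹) • ∑ v ∈ S.erase t, δ v • v := by
    have h2 : ∑ v ∈ S.erase t, δ v • v = -(δ t • t) := by
      rw [eq_neg_iff_add_eq_zero]; exact h1
    rw [h2, smul_neg, neg_smul, neg_neg, smul_smul, inv_mul_cancel₀ hδt, one_smul]
  have h5 : (-(δ t)⁻¹) • ∑ v ∈ S.erase t, δ v • v ∈ span ℝ (↑(S.erase t) : Set E) :=
    Submodule.smul_mem _ _ (Submodule.sum_mem _ fun v hv =>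
      Submodule.smul_mem _ _ (subset_span hv))
  rwa [← h3] at h5

lemma linearIndependent_finset_of {s : Finset E}
    (h : ∀ G : E → ℝ, ∑ v ∈ s, G v • v = 0 → ∀ v ∈ s, G v = 0) :
    LinearIndependent ℝ (Subtype.val : {x : E // x ∈ s} → E) := by
  classical
  rw [Fintype.linearIndependent_iff]
  intro g hg i
  set G : E → ℝ := fun x => if hx : x ∈ s then g ⟨x, hx⟩ else 0 with hG
  have hGv : ∀ v : {x : E // x ∈ s}, G ↑v = g v := by
    intro v
    rw [hG]
    dsimp only
    rw [dif_pos v.2]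
  have hsum : ∑ v ∈ s, G v • v = 0 := by
    rw [← Finset.sum_attach s (fun v => G v • v), ← Finset.univ_eq_attach, ← hg]
    exact Finset.sum_congr rfl fun v _ => by rw [hGv v]
  have := h G hsum i.1 i.2
  rw [← hGv i] at *
  exact this

/-- circuit-likeness: an element whose erase is independent and spans. -/
lemma finrank_circuitlike {s : Finset E} {t : E} (ht : t ∈ s)
    (hind : LinearIndependent ℝ (Subtype.val : {x : E // x ∈ s.erase t} → E))
    (hsp : t ∈ span ℝ (↑(s.erase t) : Set E)) :
    Module.finrank ℝ (span ℝ (↑s : Set E)) + 1 = s.card := by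
  classical
  have hspan : span ℝ (↑s : Set E) = span ℝ (↑(s.erase t) : Set E) := by
    conv_lhs => rw [← Finset.insert_erase ht]
    rw [Finset.coe_insert]
    exact Submodule.span_insert_eq_span hsp
  rw [hspan, finrank_span_finset_eq_card hind, Finset.card_erase_of_mem ht]
  have : 1 ≤ s.card := Finset.card_pos.mpr ⟨t, ht⟩
  omega

end LinHelly

namespace LinHelly
open Module Submodule Finset
variable {d : ℕ}
local notation "E" => EuclideanSpace ℝ (Fin d)

/-- Minimal supports of positive dependencies are circuits. -/
lemma exists_circuit {S : Finset E} (h0 : (0:E) ∉ S) {δ : E → ℝ}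
    (hnn : ∀ v ∈ S, 0 ≤ δ v) (hdep : ∑ v ∈ S, δ v • v = 0) (hne : ∃ v ∈ S, δ v ≠ 0) :
    ∃ C : Finset E, C ⊆ S ∧
      (∃ ε : E → ℝ, (∀ v ∈ C, 0 < ε v) ∧ ∑ v ∈ C, ε v • v = 0) ∧
      1 ≤ Module.finrank ℝ (span ℝ (↑C : Set E)) ∧
      Module.finrank ℝ (span ℝ (↑C : Set E)) + 1 = C.card := by
  classical
  set P : Finset E → Prop := fun C => C.Nonempty ∧ C ⊆ S ∧
    ∃ ε : E → ℝ, (∀ v ∈ C, 0 < ε v) ∧ ∑ v ∈ C, ε v • v = 0 with hP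
  have hC₀ : P (S.filter (fun v => δ v ≠ 0)) := by
    obtain ⟨v₀, hv₀S, hv₀⟩ := hne
    refine ⟨⟨v₀, Finset.mem_filter.mpr ⟨hv₀S, hv₀⟩⟩, Finset.filter_subset _ _, δ, ?_, ?_⟩
    · intro v hv
      obtain ⟨hvS, hvne⟩ := Finset.mem_filter.mp hv
      exact lt_of_le_of_ne (hnn v hvS) (Ne.symm hvne)
    · rw [Finset.sum_filter_of_ne]
      · exact hdep
      · intro v _ hvne hvz
        exact hvne (by rw [hvz, zero_smul])
  set 𝒞 : Finset (Finset E) := S.powerset.filter P with h𝒞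
  have h𝒞ne : 𝒞.Nonempty :=
    ⟨S.filter (fun v => δ v ≠ 0), Finset.mem_filter.mpr
      ⟨Finset.mem_powerset.mpr (Finset.filter_subset _ _), hC₀⟩⟩
  obtain ⟨C, hC𝒞, hCmin⟩ := Finset.exists_min_image 𝒞 Finset.card h𝒞ne
  obtain ⟨hCne, hCS, ε, hεpos, hεdep⟩ := (Finset.mem_filter.mp hC𝒞).2
  -- independence of every erase
  have hind : ∀ c₀ ∈ C, ∀ G : E → ℝ,
      ∑ v ∈ C.erase c₀, G v • v = 0 → ∀ v ∈ C.erase c₀, G v = 0 := by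
    intro c₀ hc₀ G hG
    by_contra hcon
    push_neg at hcon
    obtain ⟨v₁, hv₁, hGv₁⟩ := hcon
    obtain ⟨G', hG'dep, hG'v₁⟩ : ∃ G' : E → ℝ,
        (∑ v ∈ C.erase c₀, G' v • v = 0) ∧ 0 < G' v₁ := by
      rcases lt_or_gt_of_ne hGv₁ with h | h
      · refine ⟨fun v => -G v, ?_, by simpa using h⟩
        simp only [neg_smul, Finset.sum_neg_distrib, hG, neg_zero]
      · exact ⟨G, hG, h⟩
    set Cp := (C.erase c₀).filter (fun v => 0 < G' v) with hCp
    have hv₁Cp : v₁ ∈ Cp := Finset.mem_filter.mpr ⟨hv₁, hG'v₁⟩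
    obtain ⟨vs, hvsCp, hvsmin⟩ := Finset.exists_min_image Cp (fun v => ε v / G' v) ⟨v₁, hv₁Cp⟩
    obtain ⟨hvsE, hvspos⟩ := Finset.mem_filter.mp hvsCp
    have hvsC : vs ∈ C := Finset.mem_of_mem_erase hvsE
    set tstar := ε vs / G' vs with htstar
    have htpos : 0 < tstar := div_pos (hεpos vs hvsC) hvspos
    set h' : E → ℝ := fun v => if v ∈ C.erase c₀ then G' v else 0 with hh'
    set ε' : E → ℝ := fun v => ε v - tstar * h' v with hε'
    have hε'nn : ∀ v ∈ C, 0 ≤ ε' v := by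
      intro v hv
      rw [hε']
      dsimp only
      rw [hh']
      dsimp only
      split
      · rename_i hver
        rcases le_or_gt (G' v) 0 with hle | hlt
        · nlinarith [hεpos v hv]
        · have hvCp : v ∈ Cp := Finset.mem_filter.mpr ⟨hver, hlt⟩
          have := hvsmin v hvCp
          rw [le_div_iff₀ hlt] at this
          linarith
      · simpa using le_of_lt (hεpos v hv)
    have hε'vs : ε' vs = 0 := by
      rw [hε']
      dsimp only
      rw [hh']
      dsimp only
      rw [if_pos hvsE, htstar, div_mul_cancel₀ _ (ne_of_gt hvspos)]
      ring
    have hε'dep : ∑ v ∈ C, ε' v • v = 0 := by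
      have hsub : ∑ v ∈ C, (tstar * h' v) • v = tstar • ∑ v ∈ C.erase c₀, G' v • v := by
        rw [Finset.smul_sum]
        rw [show ∑ v ∈ C, (tstar * h' v) • v = ∑ v ∈ C, if v ∈ C.erase c₀ then (tstar * G' v) • v else 0 from
          Finset.sum_congr rfl fun v _ => by rw [hh']; dsimp only; split <;> simp]
        rw [Finset.sum_ite_mem, Finset.inter_eq_right.mpr (Finset.erase_subset c₀ C)]
        exact Finset.sum_congr rfl fun v _ => by rw [mul_smul]
      calc ∑ v ∈ C, ε' v • v = ∑ v ∈ C, (ε v • v - (tstar * h' v) • v) := by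
            refine Finset.sum_congr rfl fun v _ => ?_
            rw [hε']; dsimp only; rw [sub_smul]
        _ = ∑ v ∈ C, ε v • v - ∑ v ∈ C, (tstar * h' v) • v := Finset.sum_sub_distrib _ _
        _ = 0 := by rw [hεdep, hsub, hG'dep, smul_zero, sub_zero]
    set C' := C.filter (fun v => ε' v ≠ 0) with hC'
    have hc₀C' : c₀ ∈ C' := by
      refine Finset.mem_filter.mpr ⟨hc₀, ?_⟩
      have : h' c₀ = 0 := by rw [hh']; dsimp only; rw [if_neg (Finset.notMem_erase c₀ C)]
      rw [hε']; dsimp only; rw [this, mul_zero, sub_zero]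
      exact ne_of_gt (hεpos c₀ hc₀)
    have hC'𝒞 : C' ∈ 𝒞 := by
      refine Finset.mem_filter.mpr ⟨Finset.mem_powerset.mpr ((Finset.filter_subset _ _).trans hCS), ?_⟩
      refine ⟨⟨c₀, hc₀C'⟩, (Finset.filter_subset _ _).trans hCS, ε', ?_, ?_⟩
      · intro v hv
        obtain ⟨hvC, hvne⟩ := Finset.mem_filter.mp hv
        exact lt_of_le_of_ne (hε'nn v hvC) (Ne.symm hvne)
      · rw [Finset.sum_filter_of_ne]
        · exact hε'dep
        · intro v _ hvne hvz
          exact hvne (by rw [hvz, zero_smul])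
    have hlt : C'.card < C.card := by
      refine Finset.card_lt_card ?_
      rw [Finset.ssubset_iff_of_subset (Finset.filter_subset _ _)]
      refine ⟨vs, hvsC, ?_⟩
      intro hvs
      exact (Finset.mem_filter.mp hvs).2 hε'vs
    exact absurd (hCmin C' hC'𝒞) (by omega)
  obtain ⟨c₀, hc₀⟩ := hCne
  have hrank := finrank_circuitlike hc₀
    (linearIndependent_finset_of (by convert hind c₀ hc₀)) (mem_span_erase_of_dep hεpos hεdep hc₀)
  refine ⟨C, hCS, ⟨ε, hεpos, hεdep⟩, ?_, hrank⟩
  have hc₀ne : c₀ ≠ 0 := fun h => h0 (h ▸ hCS hc₀)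
  by_contra hzero
  push_neg at hzero
  interval_cases h : Module.finrank ℝ (span ℝ (↑C : Set E))
  have : span ℝ (↑C : Set E) = ⊥ := Submodule.finrank_eq_zero.mp h
  exact hc₀ne (Submodule.mem_bot ℝ |>.mp (this ▸ subset_span hc₀))

end LinHelly

namespace LinHelly
open Module Submodule Finset
variable {d : ℕ}
local notation "E" => EuclideanSpace ℝ (Fin d)
noncomputable local instance : DecidableEq (EuclideanSpace ℝ (Fin d)) := Classical.decEq _

/-- Functions supported on a finset. -/
def suppSub (T : Finset E) : Submodule ℝ ((EuclideanSpace ℝ (Fin d)) → ℝ) where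
  carrier := {c | ∀ x ∉ T, c x = 0}
  add_mem' := by
    intro a b ha hb x hx
    show a x + b x = 0
    rw [ha x hx, hb x hx, add_zero]
  zero_mem' := fun x _ => rfl
  smul_mem' := by
    intro r a ha x hx
    show r * a x = 0
    rw [ha x hx, mul_zero]

lemma mem_suppSub {T : Finset E} {f : E → ℝ} : f ∈ suppSub T ↔ ∀ x ∉ T, f x = 0 := Iff.rfl

noncomputable def suppEquiv (T : Finset E) : suppSub T ≃ₗ[ℝ] ({x : E // x ∈ T} → ℝ) where
  toFun c := fun t => c.1 t.1
  map_add' a b := rfl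
  map_smul' r a := rfl
  invFun f := ⟨fun x => if hx : x ∈ T then f ⟨x, hx⟩ else 0, fun x hx => dif_neg hx⟩
  left_inv c := by
    apply Subtype.ext
    funext x
    show (if hx : x ∈ T then c.1 x else 0) = c.1 x
    by_cases hx : x ∈ T
    · exact dif_pos hx
    · rw [dif_neg hx, c.2 x hx]
  right_inv f := by
    funext t
    show (if hx : (t:E) ∈ T then f ⟨t, hx⟩ else 0) = f t
    rw [dif_pos t.2]

instance (T : Finset E) : FiniteDimensional ℝ (suppSub T) :=
  LinearEquiv.finiteDimensional (suppEquiv T).symm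

lemma finrank_suppSub (T : Finset E) : Module.finrank ℝ (suppSub T) = T.card := by
  rw [(suppEquiv T).finrank_eq, Module.finrank_pi, Fintype.card_coe]

end LinHelly

namespace LinHelly
open Module Submodule Finset
variable {d : ℕ}
local notation "E" => EuclideanSpace ℝ (Fin d)

set_option synthInstance.maxHeartbeats 1000000 in
set_option maxHeartbeats 2000000 in
/-- In the tight case (`|T| = r+2`, `rank T = r`), some positive circuit has rank `≥ m`. -/
lemma tight_case {T : Finset E} {r m : ℕ}
    (hTcard : T.card = r + 2) (hρ : Module.finrank ℝ (span ℝ (↑T : Set E)) = r)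
    (hTpos : ∀ x ∈ span ℝ (↑T : Set E), x ∈ posHull (↑T : Set E))
    (h2m : 2 * m ≤ r + 1) :
    ∃ T₀ : Finset E, T₀ ⊆ T ∧ T₀.card ≤ r + 1 ∧
      m ≤ Module.finrank ℝ (span ℝ (↑T₀ : Set E)) ∧
      ∀ x ∈ span ℝ (↑T₀ : Set E), x ∈ posHull (↑T₀ : Set E) := by
  classical
  set ψ : ((EuclideanSpace ℝ (Fin d)) → ℝ) →ₗ[ℝ] (EuclideanSpace ℝ (Fin d)) :=
    ∑ x ∈ T, ((LinearMap.proj x).smulRight x) with hψdef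
  have hψ : ∀ c : E → ℝ, ψ c = ∑ x ∈ T, c x • x := by
    intro c
    rw [hψdef, LinearMap.coe_sum, Finset.sum_apply]
    exact Finset.sum_congr rfl fun x _ => rfl
  set φT := ψ.domRestrict (suppSub T) with hφT
  have hφTapp : ∀ f : ↥(suppSub T), φT f = ∑ x ∈ T, (f : E → ℝ) x • x := by
    intro f
    rw [hφT, LinearMap.domRestrict_apply, hψ]
  -- range of φT is the span
  have hrange : LinearMap.range φT = span ℝ (↑T : Set E) := by
    apply le_antisymm
    · rintro y ⟨f, rfl⟩
      rw [hφTapp]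
      exact Submodule.sum_mem _ fun x hx => Submodule.smul_mem _ _ (subset_span hx)
    · rw [Submodule.span_le]
      intro x hx
      have hxT : x ∈ T := hx
      set ind : E → ℝ := fun y => if y = x then 1 else 0 with hind
      have hindmem : ind ∈ suppSub T := by
        intro y hy
        rw [hind]
        exact if_neg (by intro h; rw [h] at hy; exact hy hxT)
      refine ⟨⟨ind, hindmem⟩, ?_⟩
      rw [hφTapp]
      have : ∀ y ∈ T, ind y • y = if y = x then (1:ℝ) • y else 0 := by
        intro y _
        rw [hind]
        dsimp only
        rw [ite_smul, zero_smul]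
      rw [Finset.sum_congr rfl this, Finset.sum_ite_eq' T x (fun y => (1:ℝ) • y), if_pos hxT,
        one_smul]
  have hkerdim : Module.finrank ℝ (LinearMap.ker φT) = 2 := by
    have := LinearMap.finrank_range_add_finrank_ker φT
    rw [hrange, hρ, finrank_suppSub, hTcard] at this
    omega
  -- element constructor for the kernel
  have mkmem : ∀ (f : E → ℝ) (hs : f ∈ suppSub T), (∑ x ∈ T, f x • x = 0) →
      (⟨f, hs⟩ : ↥(suppSub T)) ∈ LinearMap.ker φT := by
    intro f hs hd
    rw [LinearMap.mem_ker, hφTapp]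
    exact hd
  -- the strictly positive dependency δ̄
  have hnegsum : -(∑ v ∈ T, v) ∈ span ℝ (↑T : Set E) :=
    neg_mem (Submodule.sum_mem _ fun v hv => subset_span hv)
  obtain ⟨c₃, hc₃nn, hc₃⟩ := exists_coeffs (hTpos _ hnegsum)
  set δB : E → ℝ := fun v => if v ∈ T then 1 + c₃ v else 0 with hδB
  have hδBsupp : δB ∈ suppSub T := fun x hx => by rw [hδB]; exact if_neg hx
  have hδBpos : ∀ v ∈ T, 0 < δB v := by
    intro v hv
    rw [hδB]
    dsimp only
    rw [if_pos hv]
    linarith [hc₃nn v hv]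
  have hδBdep : ∑ v ∈ T, δB v • v = 0 := by
    have h1 : ∀ v ∈ T, δB v • v = v + c₃ v • v := by
      intro v hv
      rw [hδB]
      dsimp only
      rw [if_pos hv, add_smul, one_smul]
    rw [Finset.sum_congr rfl h1, Finset.sum_add_distrib, ← hc₃, add_neg_cancel]
  set δS : ↥(suppSub T) := ⟨δB, hδBsupp⟩ with hδS
  have hδSK : δS ∈ LinearMap.ker φT := mkmem δB hδBsupp hδBdep
  set K := LinearMap.ker φT with hK
  -- a kernel element independent from δS
  have hη : ∃ ζ : ↥(suppSub T), ζ ∈ K ∧ ζ ∉ span ℝ ({δS} : Set ↥(suppSub T)) := by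
    by_contra hcon
    push_neg at hcon
    have htop : K ≤ span ℝ ({δS} : Set ↥(suppSub T)) := fun ζ hζ => hcon ζ hζ
    have h1 : Module.finrank ℝ (span ℝ ({δS} : Set ↥(suppSub T))) ≤ 1 := by
      rcases eq_or_ne δS 0 with h | h
      · rw [h, Submodule.span_zero_singleton]
        simp
      · rw [finrank_span_singleton h]
    have h2 := Submodule.finrank_mono htop
    rw [hkerdim] at h2
    omega
  obtain ⟨ηS, hηSK, hηK⟩ := hη
  set η : E → ℝ := (ηS : E → ℝ) with hηdef
  have hηsupp : ∀ x ∉ T, η x = 0 := ηS.2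
  have hηdep : ∑ v ∈ T, η v • v = 0 := by
    have h5 := hηSK
    rw [hK, LinearMap.mem_ker, hφTapp] at h5
    exact h5
  have hTne : T.Nonempty := Finset.card_pos.mp (by omega)
  set ratio : E → ℝ := fun v => η v / δB v with hratio
  obtain ⟨tmin, htminT, htminle⟩ := Finset.exists_min_image T ratio hTne
  obtain ⟨tmax, htmaxT, htmaxle⟩ := Finset.exists_max_image T ratio hTne
  set cm := ratio tmin with hcm
  set cM := ratio tmax with hcM
  have hηv : ∀ v ∈ T, η v = ratio v * δB v := by
    intro v hv
    rw [hratio]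
    dsimp only
    rw [div_mul_cancel₀ _ (ne_of_gt (hδBpos v hv))]
  have hclt : cm < cM := by
    rcases lt_or_ge cm cM with h | h
    · exact h
    · exfalso
      apply hηK
      rw [Submodule.mem_span_singleton]
      refine ⟨cm, ?_⟩
      have hall : ∀ v ∈ T, ratio v = cm :=
        fun v hv => le_antisymm ((htmaxle v hv).trans h) (htminle v hv)
      apply Subtype.ext
      funext x
      show cm * δB x = η x
      by_cases hx : x ∈ T
      · rw [hηv x hx, hall x hx]
      · rw [hηsupp x hx, hδB]
        dsimp only
        rw [if_neg hx, mul_zero]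
  -- the two one-sided combinations
  set η' : E → ℝ := fun v => η v - cm * δB v with hη'
  set η'' : E → ℝ := fun v => cM * δB v - η v with hη''
  have hη's : η' ∈ suppSub T := by
    intro x hx
    rw [hη']
    dsimp only
    rw [hηsupp x hx, hδBsupp x hx, mul_zero, sub_zero]
  have hη''s : η'' ∈ suppSub T := by
    intro x hx
    rw [hη'']
    dsimp only
    rw [hηsupp x hx, hδBsupp x hx, mul_zero, zero_sub, neg_zero]
  have hη'dep : ∑ v ∈ T, η' v • v = 0 := by
    have h1 : ∀ v ∈ T, η' v • v = η v • v - cm • (δB v • v) := by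
      intro v _
      rw [hη']
      dsimp only
      rw [sub_smul, smul_smul]
    rw [Finset.sum_congr rfl h1, Finset.sum_sub_distrib, hηdep, ← Finset.smul_sum, hδBdep,
      smul_zero, sub_zero]
  have hη''dep : ∑ v ∈ T, η'' v • v = 0 := by
    have h1 : ∀ v ∈ T, η'' v • v = cM • (δB v • v) - η v • v := by
      intro v _
      rw [hη'']
      dsimp only
      rw [sub_smul, smul_smul]
    rw [Finset.sum_congr rfl h1, Finset.sum_sub_distrib, hηdep, ← Finset.smul_sum, hδBdep,
      smul_zero, sub_zero]
  have hη'eq : ∀ v ∈ T, η' v = (ratio v - cm) * δB v := by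
    intro v hv
    rw [hη']
    dsimp only
    rw [hηv v hv]
    ring
  have hη''eq : ∀ v ∈ T, η'' v = (cM - ratio v) * δB v := by
    intro v hv
    rw [hη'']
    dsimp only
    rw [hηv v hv]
    ring
  have hη'nn : ∀ v ∈ T, 0 ≤ η' v := fun v hv => by
    rw [hη'eq v hv]
    exact mul_nonneg (by linarith [htminle v hv]) (le_of_lt (hδBpos v hv))
  have hη''nn : ∀ v ∈ T, 0 ≤ η'' v := fun v hv => by
    rw [hη''eq v hv]
    exact mul_nonneg (by linarith [htmaxle v hv]) (le_of_lt (hδBpos v hv))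
  have hη'tmin : η' tmin = 0 := by
    rw [hη'eq tmin htminT, ← hcm, sub_self, zero_mul]
  have hη''tmax : η'' tmax = 0 := by
    rw [hη''eq tmax htmaxT, ← hcM, sub_self, zero_mul]
  have hη'tmax : 0 < η' tmax := by
    rw [hη'eq tmax htmaxT, ← hcM]
    exact mul_pos (by linarith) (hδBpos tmax htmaxT)
  have hη''tmin : 0 < η'' tmin := by
    rw [hη''eq tmin htminT, ← hcm]
    exact mul_pos (by linarith) (hδBpos tmin htminT)
  have hcover : ∀ v ∈ T, η' v ≠ 0 ∨ η'' v ≠ 0 := by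
    intro v hv
    by_contra hcon
    push_neg at hcon
    obtain ⟨h1, h2⟩ := hcon
    rw [hη'eq v hv] at h1
    rw [hη''eq v hv] at h2
    have hδne := ne_of_gt (hδBpos v hv)
    rcases mul_eq_zero.mp h1 with h1' | h1'
    · rcases mul_eq_zero.mp h2 with h2' | h2'
      · have : cm = cM := by linarith [sub_eq_zero.mp h1', sub_eq_zero.mp h2']
        exact absurd this (ne_of_lt hclt)
      · exact hδne h2'
    · exact hδne h1'
  -- the pair (δS, θS) spans the kernel
  have pairtop : ∀ (θ : E → ℝ) (hθs : θ ∈ suppSub T), (∑ v ∈ T, θ v • v = 0) →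
      ∀ v₀ ∈ T, θ v₀ = 0 → ∀ v₁ ∈ T, θ v₁ ≠ 0 →
      ∀ (ξ : E → ℝ), ξ ∈ suppSub T → (∑ v ∈ T, ξ v • v = 0) →
      ∃ a b : ℝ, ∀ x, ξ x = a * δB x + b * θ x := by
    intro θ hθs hθdep v₀ hv₀T hθv₀ v₁ hv₁T hθv₁ ξ hξs hξdep
    set θS : ↥(suppSub T) := ⟨θ, hθs⟩ with hθS
    set ξS : ↥(suppSub T) := ⟨ξ, hξs⟩ with hξS
    have hθSK : θS ∈ K := mkmem θ hθs hθdep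
    have hξSK : ξS ∈ K := mkmem ξ hξs hξdep
    have li : LinearIndependent ℝ ![δS, θS] := by
      rw [LinearIndependent.pair_iff]
      intro s t hst
      have happ : ∀ x : E, s * δB x + t * θ x = 0 := by
        intro x
        have h5 := congrArg (fun z : ↥(suppSub T) => (z : E → ℝ) x) hst
        simpa using h5
      have hs0 : s = 0 := by
        have h6 := happ v₀
        rw [hθv₀, mul_zero, add_zero] at h6
        exact (mul_eq_zero.mp h6).resolve_right (ne_of_gt (hδBpos v₀ hv₀T))
      refine ⟨hs0, ?_⟩
      have h7 := happ v₁
      rw [hs0, zero_mul, zero_add] at h7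
      exact (mul_eq_zero.mp h7).resolve_right hθv₁
    have hspanK : span ℝ ({δS, θS} : Set ↥(suppSub T)) = K := by
      apply Submodule.eq_of_le_of_finrank_le
      · rw [Submodule.span_le]
        intro z hz
        rcases hz with h | h
        · rw [h]; exact hδSK
        · rw [Set.mem_singleton_iff.mp h]; exact hθSK
      · rw [hkerdim]
        have hset : ({δS, θS} : Set ↥(suppSub T)) = Set.range ![δS, θS] := by
          simp [Matrix.range_cons, Matrix.range_empty, Set.pair_comm]
        rw [hset, finrank_span_eq_card li]
        simp
    have hξmem : ξS ∈ span ℝ ({δS, θS} : Set ↥(suppSub T)) := by rw [hspanK]; exact hξSK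
    obtain ⟨a, b, hab⟩ := Submodule.mem_span_pair.mp hξmem
    refine ⟨a, b, fun x => ?_⟩
    have h8 := congrArg (fun z : ↥(suppSub T) => (z : E → ℝ) x) hab
    simpa using h8.symm
  -- extraction of a circuit-like support from a one-sided combination
  have extract : ∀ (θ : E → ℝ), θ ∈ suppSub T → (∑ v ∈ T, θ v • v = 0) →
      (∀ v ∈ T, 0 ≤ θ v) → ∀ v₀ ∈ T, θ v₀ = 0 → ∀ v₁ ∈ T, 0 < θ v₁ →
      ∃ C₁ : Finset E, C₁ ⊆ T ∧ (∀ v ∈ T, θ v ≠ 0 → v ∈ C₁) ∧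
        Module.finrank ℝ (span ℝ (↑C₁ : Set E)) + 1 = C₁.card ∧
        (∀ x ∈ span ℝ (↑C₁ : Set E), x ∈ posHull (↑C₁ : Set E)) := by
    intro θ hθs hθdep hθnn v₀ hv₀T hθv₀ v₁ hv₁T hθv₁
    set C₁ := T.filter (fun v => θ v ≠ 0) with hC₁
    have hsub : C₁ ⊆ T := Finset.filter_subset _ _
    have hmemC : ∀ v ∈ T, θ v ≠ 0 → v ∈ C₁ := fun v hv hne => Finset.mem_filter.mpr ⟨hv, hne⟩
    have hθposC : ∀ v ∈ C₁, 0 < θ v := by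
      intro v hv
      obtain ⟨hvT, hvne⟩ := Finset.mem_filter.mp hv
      exact lt_of_le_of_ne (hθnn v hvT) (Ne.symm hvne)
    have hθdepC : ∑ v ∈ C₁, θ v • v = 0 := by
      rw [hC₁, Finset.sum_filter_of_ne]
      · exact hθdep
      · intro v _ hvne hvz
        exact hvne (by rw [hvz, zero_smul])
    have hv₁C : v₁ ∈ C₁ := hmemC v₁ hv₁T (ne_of_gt hθv₁)
    have hv₀C : v₀ ∉ C₁ := fun h => (Finset.mem_filter.mp h).2 hθv₀
    have hind : ∀ G : E → ℝ, ∑ v ∈ C₁.erase v₁, G v • v = 0 → ∀ v ∈ C₁.erase v₁, G v = 0 := by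
      intro G hG
      set G' : E → ℝ := fun x => if x ∈ C₁.erase v₁ then G x else 0 with hG'
      have hG's : G' ∈ suppSub T := by
        intro x hx
        rw [hG']
        exact if_neg (fun h => hx (hsub (Finset.mem_of_mem_erase h)))
      have hG'dep : ∑ v ∈ T, G' v • v = 0 := by
        have e1 : ∑ v ∈ C₁.erase v₁, G' v • v = ∑ v ∈ T, G' v • v := by
          apply Finset.sum_subset ((Finset.erase_subset _ _).trans hsub)
          intro x _ hxn
          show (if x ∈ C₁.erase v₁ then G x else 0) • x = 0
          rw [if_neg hxn, zero_smul]
        have e2 : ∑ v ∈ C₁.erase v₁, G' v • v = ∑ v ∈ C₁.erase v₁, G v • v := by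
          refine Finset.sum_congr rfl fun v hv => ?_
          show (if v ∈ C₁.erase v₁ then G v else 0) • v = G v • v
          rw [if_pos hv]
        rw [← e1, e2]
        exact hG
      obtain ⟨a, b, hab⟩ := pairtop θ hθs hθdep v₀ hv₀T hθv₀ v₁ hv₁T (ne_of_gt hθv₁) G' hG's hG'dep
      have hG'v₀ : G' v₀ = 0 := by
        rw [hG']
        exact if_neg (fun h => hv₀C (Finset.mem_of_mem_erase h))
      have hG'v₁ : G' v₁ = 0 := by
        rw [hG']
        exact if_neg (Finset.notMem_erase v₁ C₁)
      have ha : a = 0 := by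
        have h6 := (hab v₀).symm
        rw [hG'v₀, hθv₀, mul_zero, add_zero] at h6
        exact (mul_eq_zero.mp h6).resolve_right (ne_of_gt (hδBpos v₀ hv₀T))
      have hb : b = 0 := by
        have h7 := (hab v₁).symm
        rw [hG'v₁, ha, zero_mul, zero_add] at h7
        exact (mul_eq_zero.mp h7).resolve_right (ne_of_gt hθv₁)
      intro v hv
      have h8 := hab v
      rw [ha, hb, zero_mul, zero_mul, add_zero] at h8
      have h9 : G' v = G v := by rw [hG']; exact if_pos hv
      rw [← h9]
      exact h8
    exact ⟨C₁, hsub, hmemC,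
      finrank_circuitlike hv₁C (linearIndependent_finset_of (by convert hind))
        (mem_span_erase_of_dep hθposC hθdepC hv₁C),
      span_subset_posHull hθposC hθdepC⟩
  obtain ⟨C₁, hC₁T, hC₁mem, hC₁rank, hC₁pos⟩ :=
    extract η' hη's hη'dep hη'nn tmin htminT hη'tmin tmax htmaxT hη'tmax
  obtain ⟨C₂, hC₂T, hC₂mem, hC₂rank, hC₂pos⟩ :=
    extract η'' hη''s hη''dep hη''nn tmax htmaxT hη''tmax tmin htminT hη''tmin
  have hTsub : T ⊆ C₁ ∪ C₂ := by
    intro v hv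
    rcases hcover v hv with h | h
    · exact Finset.mem_union_left _ (hC₁mem v hv h)
    · exact Finset.mem_union_right _ (hC₂mem v hv h)
  have hcards : r + 2 ≤ C₁.card + C₂.card := by
    calc r + 2 = T.card := hTcard.symm
      _ ≤ (C₁ ∪ C₂).card := Finset.card_le_card hTsub
      _ ≤ C₁.card + C₂.card := Finset.card_union_le _ _
  have hw₁r : Module.finrank ℝ (span ℝ (↑C₁ : Set E)) ≤ r :=
    hρ ▸ Submodule.finrank_mono (Submodule.span_mono (Finset.coe_subset.mpr hC₁T))
  have hw₂r : Module.finrank ℝ (span ℝ (↑C₂ : Set E)) ≤ r :=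
    hρ ▸ Submodule.finrank_mono (Submodule.span_mono (Finset.coe_subset.mpr hC₂T))
  rcases le_or_gt m (Module.finrank ℝ (span ℝ (↑C₁ : Set E))) with h | h
  · exact ⟨C₁, hC₁T, by omega, h, hC₁pos⟩
  · refine ⟨C₂, hC₂T, by omega, by omega, hC₂pos⟩

end LinHelly

namespace LinHelly
open Module Submodule Finset
variable {d : ℕ}
local notation "E" => EuclideanSpace ℝ (Fin d)

set_option synthInstance.maxHeartbeats 1000000 in
set_option maxHeartbeats 2000000 in
/-- Main lemma: a positively-spanning set of an `r`-dimensional subspace contains a small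
subset positively spanning a subspace of dimension at least `m`. -/
lemma main_aux (r : ℕ) : ∀ (V : Submodule ℝ (EuclideanSpace ℝ (Fin d))) (S : Finset E) (m : ℕ),
    1 ≤ m → m ≤ r → Module.finrank ℝ V = r → (0:E) ∉ S → (↑S : Set E) ⊆ (V : Set E) →
    (∀ x ∈ V, x ∈ posHull (↑S : Set E)) →
    ∃ T : Finset E, T ⊆ S ∧ T.card ≤ max (r+1) (2*m) ∧
      m ≤ Module.finrank ℝ (span ℝ (↑T : Set E)) ∧
      ∀ x ∈ span ℝ (↑T : Set E), x ∈ posHull (↑T : Set E) := by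
  induction r using Nat.strong_induction_on with
  | _ r IH =>
  intro V S m hm1 hmr hVr h0 hSV hpos
  classical
  by_cases hbig : S.card ≤ max (r+1) (2*m)
  · -- take S itself
    have hspanV : span ℝ (↑S : Set E) = V :=
      le_antisymm (span_le.mpr hSV) (fun x hx => posHull_subset_span _ (hpos x hx))
    refine ⟨S, subset_rfl, hbig, ?_, ?_⟩
    · rw [hspanV, hVr]; exact hmr
    · intro x hx
      rw [hspanV] at hx
      exact hpos x hx
  push_neg at hbig
  have hcard1 : r + 1 < S.card := (le_max_left _ _).trans_lt hbig
  have hcard2 : 2*m < S.card := (le_max_right _ _).trans_lt hbig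
  have hSne : S.Nonempty := Finset.card_pos.mp (by omega)
  -- a strictly positive dependency on S
  have hsumV : (∑ v ∈ S, v) ∈ V := Submodule.sum_mem _ fun v hv => hSV hv
  obtain ⟨c, hcnn, hceq⟩ := exists_coeffs (hpos _ (neg_mem hsumV))
  set δ : E → ℝ := fun v => 1 + c v with hδ
  have hδpos : ∀ v ∈ S, 0 < δ v := by
    intro v hv
    rw [hδ]
    dsimp only
    linarith [hcnn v hv]
  have hδdep : ∑ v ∈ S, δ v • v = 0 := by
    have h1 : ∀ v ∈ S, δ v • v = v + c v • v := by
      intro v _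
      rw [hδ]
      dsimp only
      rw [add_smul, one_smul]
    rw [Finset.sum_congr rfl h1, Finset.sum_add_distrib, ← hceq, add_neg_cancel]
  -- extract a circuit
  obtain ⟨C, hCS, ⟨ε, hεpos, hεdep⟩, hw1, hwcard⟩ :=
    exists_circuit h0 (fun v hv => le_of_lt (hδpos v hv)) hδdep
      ⟨hSne.choose, hSne.choose_spec, ne_of_gt (hδpos _ hSne.choose_spec)⟩
  set W := span ℝ (↑C : Set E) with hW
  set w := Module.finrank ℝ W with hwdef
  have hWV : W ≤ V := span_le.mpr (fun x hx => hSV (hCS hx))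
  have hwr : w ≤ r := hVr ▸ Submodule.finrank_mono hWV
  have hWpos : ∀ x ∈ W, x ∈ posHull (↑C : Set E) := span_subset_posHull hεpos hεdep
  by_cases hwm : m ≤ w
  · exact ⟨C, hCS, by omega, hwm, hWpos⟩
  push_neg at hwm
  -- orthogonal projection away from W
  set π : (EuclideanSpace ℝ (Fin d)) →ₗ[ℝ] (EuclideanSpace ℝ (Fin d)) :=
    LinearMap.id - (W.subtype ∘ₗ (orthogonalProjection W).toLinearMap) with hπdef
  have hπ : ∀ x : E, π x = x - (orthogonalProjection W x : E) := fun x => rfl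
  have hπW : ∀ x ∈ W, π x = 0 := by
    intro x hx
    rw [hπ, (show (orthogonalProjection W x : E) = x from Submodule.starProjection_eq_self_iff.mpr hx), sub_self]
  have hπperp : ∀ x : E, π x ∈ Wᗮ := fun x => Submodule.sub_starProjection_mem_orthogonal x
  have hπV : ∀ x ∈ V, π x ∈ V := fun x hx =>
    sub_mem hx (hWV (SetLike.coe_mem (orthogonalProjection W x)))
  have hπid : ∀ x ∈ Wᗮ, π x = x := by
    intro x hx
    rw [hπ, Submodule.orthogonalProjectionOnto_apply_of_mem_orthogonal hx]
    simp
  have hπWmem : ∀ x ∈ V, π x = 0 → x ∈ W := by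
    intro x _ hx
    rw [hπ, sub_eq_zero] at hx
    rw [hx]
    exact SetLike.coe_mem _
  set V' := Wᗮ ⊓ V with hV'
  set r' := Module.finrank ℝ V' with hr'def
  have hwr' : w + r' = r := by
    have hWV'bot : W ⊓ V' = ⊥ := by
      rw [hV', ← inf_assoc, Submodule.inf_orthogonal_eq_bot, bot_inf_eq]
    have hWV'sup : W ⊔ V' = V := by
      apply le_antisymm (sup_le hWV inf_le_right)
      intro x hx
      have hxeq : x = (orthogonalProjection W x : E) + π x := by
        rw [hπ, add_sub_cancel]
      rw [hxeq]
      exact add_mem (mem_sup_left (SetLike.coe_mem _))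
        (mem_sup_right (Submodule.mem_inf.mpr ⟨hπperp x, hπV x hx⟩))
    have := Submodule.finrank_sup_add_finrank_inf_eq W V'
    rw [hWV'sup, hWV'bot, finrank_bot, hVr] at this
    omega
  have hr'lt : r' < r := by omega
  set S₂ := S.filter (fun v => v ∉ W) with hS₂
  set Q := S₂.image π with hQ
  have h0Q : (0:E) ∉ Q := by
    intro h
    obtain ⟨v, hv, hπv⟩ := Finset.mem_image.mp h
    obtain ⟨hvS, hvW⟩ := Finset.mem_filter.mp hv
    exact hvW (hπWmem v (hSV hvS) hπv)
  have hQV' : (↑Q : Set E) ⊆ (V' : Set E) := by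
    intro y hy
    obtain ⟨v, hv, rfl⟩ := Finset.mem_image.mp hy
    exact Submodule.mem_inf.mpr ⟨hπperp v, hπV v (hSV (Finset.filter_subset _ _ hv))⟩
  have hQpos : ∀ x ∈ V', x ∈ posHull (↑Q : Set E) := by
    intro x hx
    obtain ⟨hxperp, hxV⟩ := Submodule.mem_inf.mp hx
    obtain ⟨c₂, hc₂nn, hc₂⟩ := exists_coeffs (hpos x hxV)
    have hx2 : x = ∑ v ∈ S₂, c₂ v • π v := by
      have h5 : π x = ∑ v ∈ S, c₂ v • π v := by
        rw [hc₂, map_sum]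
        exact Finset.sum_congr rfl fun v _ => by rw [map_smul]
      have h6 : ∑ v ∈ S₂, c₂ v • π v = ∑ v ∈ S, c₂ v • π v := by
        apply Finset.sum_subset (Finset.filter_subset _ _)
        intro v hvS hvn
        have hvW : v ∈ W := by
          by_contra hvW
          exact hvn (Finset.mem_filter.mpr ⟨hvS, hvW⟩)
        rw [hπW v hvW, smul_zero]
      rw [h6, ← h5, hπid x hxperp]
    rw [hx2]
    exact sum_mem_posHull _ _ _ (fun v hv => hc₂nn v (Finset.filter_subset _ _ hv))
      (fun v hv => mem_posHull_of_mem (Finset.mem_image_of_mem π hv))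
  obtain ⟨T₂', hT₂'Q, hT₂'card, hT₂'rank, hT₂'pos⟩ :=
    IH r' hr'lt V' Q (m - w) (by omega) (by omega) rfl h0Q hQV' hQpos
  -- pull back along π
  have hpre : ∀ y ∈ T₂', ∃ v ∈ S₂, π v = y := fun y hy => Finset.mem_image.mp (hT₂'Q hy)
  choose! g hg1 hg2 using hpre
  set T₂ := T₂'.image g with hT₂
  have hT₂S₂ : T₂ ⊆ S₂ := by
    rw [hT₂]
    intro v hv
    obtain ⟨y, hy, rfl⟩ := Finset.mem_image.mp hv
    exact hg1 y hy
  have hT₂card : T₂.card ≤ T₂'.card := Finset.card_image_le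
  set T := C ∪ T₂ with hT
  have hTS : T ⊆ S := Finset.union_subset hCS (hT₂S₂.trans (Finset.filter_subset _ _))
  have h0T : (0:E) ∉ T := fun h => h0 (hTS h)
  have hCT : C ⊆ T := Finset.subset_union_left
  have hT₂T : T₂ ⊆ T := Finset.subset_union_right
  have hπT₂ : ∀ v ∈ T₂, π v ∈ T₂' := by
    intro v hv
    obtain ⟨y, hy, rfl⟩ := Finset.mem_image.mp hv
    rw [hg2 y hy]
    exact hy
  have hTVset : (↑T : Set E) ⊆ (V : Set E) := fun x hx => hSV (hTS hx)
  have hTV : span ℝ (↑T : Set E) ≤ V := span_le.mpr hTVset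
  -- the union T is positively spanning for its span
  have hTpos : ∀ x ∈ span ℝ (↑T : Set E), x ∈ posHull (↑T : Set E) := by
    intro x hx
    have hxV : x ∈ V := hTV hx
    have hπx : π x ∈ span ℝ (↑T₂' : Set E) := by
      have h1 : π x ∈ Submodule.map π (span ℝ (↑T : Set E)) := Submodule.mem_map_of_mem hx
      rw [Submodule.map_span] at h1
      have h2 : span ℝ (π '' (↑T : Set E)) ≤ span ℝ (↑T₂' : Set E) := by
        rw [Submodule.span_le]
        rintro y ⟨v, hvT, rfl⟩
        have hvT' : v ∈ T := hvT
        rcases Finset.mem_union.mp hvT' with hvC | hvT₂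
        · have : π v = 0 := hπW v (subset_span hvC)
          rw [SetLike.mem_coe, this]
          exact zero_mem _
        · exact subset_span (hπT₂ v hvT₂)
      exact h2 h1
    obtain ⟨q, hqnn, hqeq⟩ := exists_coeffs (hT₂'pos _ hπx)
    set u := ∑ y ∈ T₂', q y • g y with hu
    have huT : u ∈ posHull (↑T : Set E) :=
      sum_mem_posHull _ _ _ hqnn
        (fun y hy => mem_posHull_of_mem (hT₂T (Finset.mem_image_of_mem g hy)))
    have huV : u ∈ V := hTV (posHull_subset_span _ huT)
    have hπu : π u = π x := by
      rw [hu, map_sum]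
      have : ∀ y ∈ T₂', π (q y • g y) = q y • y := by
        intro y hy
        rw [map_smul, hg2 y hy]
      rw [Finset.sum_congr rfl this, ← hqeq]
    have hxu : x - u ∈ W :=
      hπWmem _ (sub_mem hxV huV) (by rw [map_sub, hπu, sub_self])
    have h7 := add_mem_posHull
      (posHull_mono (Finset.coe_subset.mpr hCT) (hWpos _ hxu)) huT
    rwa [sub_add_cancel] at h7
  -- rank of span T is at least m
  have hTrank : m ≤ Module.finrank ℝ (span ℝ (↑T : Set E)) := by
    set φ := π ∘ₗ (span ℝ (↑T : Set E)).subtype with hφ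
    have hrange : span ℝ (↑T₂' : Set E) ≤ LinearMap.range φ := by
      rw [Submodule.span_le]
      intro y hy
      refine ⟨⟨g y, subset_span (hT₂T (Finset.mem_image_of_mem g hy))⟩, ?_⟩
      show π (g y) = y
      exact hg2 y hy
    have hWspanT : W ≤ span ℝ (↑T : Set E) := span_mono (Finset.coe_subset.mpr hCT)
    set ι : ↥W →ₗ[ℝ] ↥(LinearMap.ker φ) :=
      (Submodule.inclusion hWspanT).codRestrict (LinearMap.ker φ)
        (fun x => by
          rw [LinearMap.mem_ker]
          show π ((Submodule.inclusion hWspanT x : ↥(span ℝ (↑T : Set E))) : E) = 0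
          exact hπW x.1 x.2) with hι
    have hιinj : Function.Injective ι := by
      intro a b hab
      have h8 : (a : E) = (b : E) := by
        have := congrArg (fun z : ↥(LinearMap.ker φ) => ((z : ↥(span ℝ (↑T : Set E))) : E)) hab
        simpa [hι] using this
      exact Subtype.ext h8
    have h9 : w ≤ Module.finrank ℝ (LinearMap.ker φ) :=
      LinearMap.finrank_le_finrank_of_injective hιinj
    have h10 : m - w ≤ Module.finrank ℝ (LinearMap.range φ) :=
      hT₂'rank.trans (Submodule.finrank_mono hrange)
    have h11 := LinearMap.finrank_range_add_finrank_ker φ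
    omega
  by_cases hTbig : T.card ≤ max (r+1) (2*m)
  · exact ⟨T, hTS, hTbig, hTrank, hTpos⟩
  push_neg at hTbig
  have hTmax1 : r + 1 < T.card := (le_max_left _ _).trans_lt hTbig
  have hTmax2 : 2*m < T.card := (le_max_right _ _).trans_lt hTbig
  have hCcard : C.card = w + 1 := hwcard.symm
  have hTcard_ub : T.card ≤ w + 1 + T₂'.card := by
    calc T.card ≤ C.card + T₂.card := Finset.card_union_le _ _
      _ ≤ w + 1 + T₂'.card := by omega
  have hkey : T.card = r + 2 ∧ 2*m ≤ r + 1 := by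
    rcases le_total (r'+1) (2*(m-w)) with h | h
    · rw [max_eq_right h] at hT₂'card
      omega
    · rw [max_eq_left h] at hT₂'card
      omega
  set ρ := Module.finrank ℝ (span ℝ (↑T : Set E)) with hρdef
  have hρr : ρ ≤ r := hVr ▸ Submodule.finrank_mono hTV
  by_cases hρlt : ρ < r
  · obtain ⟨T₀, hT₀T, hT₀card, hT₀rank, hT₀pos⟩ :=
      IH ρ hρlt (span ℝ (↑T : Set E)) T m hm1 hTrank rfl h0T subset_span hTpos
    exact ⟨T₀, hT₀T.trans hTS, hT₀card.trans (max_le_max (by omega) le_rfl), hT₀rank, hT₀pos⟩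
  have hρeq : ρ = r := by omega
  obtain ⟨T₀, hT₀T, hT₀card, hT₀rank, hT₀pos⟩ :=
    tight_case hkey.1 hρeq hTpos hkey.2
  exact ⟨T₀, hT₀T.trans hTS, by omega, hT₀rank, hT₀pos⟩

end LinHelly


/-- The lineality set `pos A ∩ (− pos A)` of the conical hull of `A`. -/
def linealitySet {d : ℕ} (A : Set (EuclideanSpace ℝ (Fin d))) : Set (EuclideanSpace ℝ (Fin d)) :=
  posHull A ∩ (-posHull A)

/-- `S` contains a `k`-dimensional cone (with some apex `u`). -/
def ContainsConeDim {d : ℕ} (k : ℕ) (S : Set (EuclideanSpace ℝ (Fin d))) : Prop :=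
  ∃ (u : EuclideanSpace ℝ (Fin d)) (V : Set (EuclideanSpace ℝ (Fin d))),
    Module.finrank ℝ (Submodule.span ℝ V) = k ∧ (fun x => u + x) '' posHull V ⊆ S

namespace LinHelly
open Module Submodule Finset
variable {d : ℕ}
local notation "E" => EuclideanSpace ℝ (Fin d)

set_option maxHeartbeats 1000000 in
theorem lineality_helly' (d k : ℕ) (hk1 : 1 ≤ k) (hkd : k ≤ d)
    (A : Finset (EuclideanSpace ℝ (Fin d)))
    (H : ∀ B ⊆ A, B.card ≤ max (d + 1) (2 * (k + 1)) →
      Module.finrank ℝ (Submodule.span ℝ (linealitySet (B : Set (EuclideanSpace ℝ (Fin d))))) ≤ k) :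
    Module.finrank ℝ (Submodule.span ℝ (linealitySet (A : Set (EuclideanSpace ℝ (Fin d))))) ≤ k := by
  classical
  by_contra hk
  push_neg at hk
  set L : Set (EuclideanSpace ℝ (Fin d)) := linealitySet (A : Set (EuclideanSpace ℝ (Fin d))) with hL
  -- a finite subset of L spanning span L
  obtain ⟨G, hGspan⟩ := IsNoetherian.noetherian (Submodule.span ℝ L)
  have hGel : ∀ x ∈ G, ∃ Fx : Finset (EuclideanSpace ℝ (Fin d)),
      ↑Fx ⊆ L ∧ x ∈ Submodule.span ℝ (↑Fx : Set (EuclideanSpace ℝ (Fin d))) := by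
    intro x hx
    have hxL : x ∈ Submodule.span ℝ L := by
      rw [← hGspan]
      exact subset_span hx
    exact Submodule.mem_span_finite_of_mem_span hxL
  choose! Ff hFf1 hFf2 using hGel
  set F := G.biUnion Ff with hF
  have hFL : (↑F : Set (EuclideanSpace ℝ (Fin d))) ⊆ L := by
    intro x hx
    obtain ⟨g, hg, hxg⟩ := Finset.mem_biUnion.mp hx
    exact hFf1 g hg hxg
  have hNF : Submodule.span ℝ L ≤ Submodule.span ℝ (↑F : Set (EuclideanSpace ℝ (Fin d))) := by
    rw [← hGspan, Submodule.span_le]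
    intro x hx
    exact Submodule.span_mono (Finset.coe_subset.mpr (Finset.subset_biUnion_of_mem Ff hx))
      (hFf2 x hx)
  -- coefficients witnessing membership in the lineality set
  have hFmem : ∀ x ∈ F, x ∈ posHull (A : Set (EuclideanSpace ℝ (Fin d))) ∧
      -x ∈ posHull (A : Set (EuclideanSpace ℝ (Fin d))) := by
    intro x hx
    obtain ⟨h1, h2⟩ := hFL hx
    exact ⟨h1, Set.mem_neg.mp h2⟩
  have hαe : ∀ x ∈ F, ∃ a : (EuclideanSpace ℝ (Fin d)) → ℝ,
      (∀ v ∈ A, 0 ≤ a v) ∧ x = ∑ v ∈ A, a v • v :=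
    fun x hx => exists_coeffs (hFmem x hx).1
  have hβe : ∀ x ∈ F, ∃ b : (EuclideanSpace ℝ (Fin d)) → ℝ,
      (∀ v ∈ A, 0 ≤ b v) ∧ -x = ∑ v ∈ A, b v • v :=
    fun x hx => exists_coeffs (hFmem x hx).2
  choose! α hα1 hα2 using hαe
  choose! β hβ1 hβ2 using hβe
  set γ : (EuclideanSpace ℝ (Fin d)) → ℝ := fun v => ∑ x ∈ F, (α x v + β x v) with hγ
  have hγdep : ∑ v ∈ A, γ v • v = 0 := by
    have h1 : ∀ v ∈ A, γ v • v = ∑ x ∈ F, (α x v • v + β x v • v) := by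
      intro v _
      rw [hγ]
      dsimp only
      rw [Finset.sum_smul]
      exact Finset.sum_congr rfl fun x _ => add_smul _ _ _
    rw [Finset.sum_congr rfl h1, Finset.sum_comm]
    have h2 : ∀ x ∈ F, ∑ v ∈ A, (α x v • v + β x v • v) = 0 := by
      intro x hx
      rw [Finset.sum_add_distrib, ← hα2 x hx, ← hβ2 x hx, add_neg_cancel]
    rw [Finset.sum_congr rfl h2, Finset.sum_const_zero]
  have hγnn : ∀ v ∈ A, 0 ≤ γ v := by
    intro v hv
    rw [hγ]
    exact Finset.sum_nonneg fun x hx => add_nonneg (hα1 x hx v hv) (hβ1 x hx v hv)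
  set S := (A.filter (fun v => γ v ≠ 0)).erase 0 with hS
  have h0S : (0 : EuclideanSpace ℝ (Fin d)) ∉ S := Finset.notMem_erase _ _
  have hSA : S ⊆ A := (Finset.erase_subset _ _).trans (Finset.filter_subset _ _)
  have hγpos : ∀ v ∈ S, 0 < γ v := by
    intro v hv
    obtain ⟨hvA, hvne⟩ := Finset.mem_filter.mp (Finset.mem_of_mem_erase hv)
    exact lt_of_le_of_ne (hγnn v hvA) (Ne.symm hvne)
  have hγdepS : ∑ v ∈ S, γ v • v = 0 := by
    rw [hS, Finset.sum_erase _ (by rw [smul_zero]), Finset.sum_filter_of_ne]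
    · exact hγdep
    · intro v _ hvne hvz
      exact hvne (by rw [hvz, zero_smul])
  -- F lies in the span of S
  have hFspanS : ∀ x ∈ F, x ∈ Submodule.span ℝ (↑S : Set (EuclideanSpace ℝ (Fin d))) := by
    intro x hx
    rw [hα2 x hx]
    refine Submodule.sum_mem _ fun v hv => ?_
    rcases eq_or_ne v 0 with rfl | hv0
    · rw [smul_zero]
      exact zero_mem _
    rcases eq_or_ne (α x v) 0 with hαv | hαv
    · rw [hαv, zero_smul]
      exact zero_mem _
    have hγv : γ v ≠ 0 := by
      have h3 : α x v + β x v ≤ γ v := by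
        rw [hγ]
        exact Finset.single_le_sum
          (f := fun x' => α x' v + β x' v)
          (fun x' hx' => add_nonneg (hα1 x' hx' v hv) (hβ1 x' hx' v hv)) hx
      have h4 : 0 < α x v := lt_of_le_of_ne (hα1 x hx v hv) (Ne.symm hαv)
      have h5 := hβ1 x hx v hv
      intro h6
      rw [h6] at h3
      linarith
    exact Submodule.smul_mem _ _ (subset_span
      (Finset.mem_erase.mpr ⟨hv0, Finset.mem_filter.mpr ⟨hv, hγv⟩⟩))
  have hrankS : k + 1 ≤ Module.finrank ℝ (Submodule.span ℝ (↑S : Set (EuclideanSpace ℝ (Fin d)))) := by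
    have h7 : Submodule.span ℝ L ≤ Submodule.span ℝ (↑S : Set (EuclideanSpace ℝ (Fin d))) := by
      refine hNF.trans (Submodule.span_le.mpr ?_)
      intro x hx
      exact hFspanS x hx
    have := Submodule.finrank_mono h7
    omega
  set r := Module.finrank ℝ (Submodule.span ℝ (↑S : Set (EuclideanSpace ℝ (Fin d)))) with hr
  have hrd : r ≤ d := by
    have := Submodule.finrank_le (Submodule.span ℝ (↑S : Set (EuclideanSpace ℝ (Fin d))))
    rwa [finrank_euclideanSpace_fin] at this
  obtain ⟨T, hTS, hTcard, hTrank, hTpos⟩ :=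
    main_aux r (Submodule.span ℝ (↑S : Set (EuclideanSpace ℝ (Fin d)))) S (k+1)
      (by omega) hrankS rfl h0S subset_span (span_subset_posHull hγpos hγdepS)
  have hTA : T ⊆ A := hTS.trans hSA
  have hTcard' : T.card ≤ max (d + 1) (2 * (k + 1)) :=
    hTcard.trans (max_le_max (by omega) le_rfl)
  have hH := H T hTA hTcard'
  have hsub : Submodule.span ℝ (↑T : Set (EuclideanSpace ℝ (Fin d))) ≤
      Submodule.span ℝ (linealitySet (↑T : Set (EuclideanSpace ℝ (Fin d)))) := by
    rw [Submodule.span_le]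
    intro t ht
    refine subset_span ⟨hTpos t (subset_span ht), ?_⟩
    rw [Set.mem_neg]
    exact hTpos (-t) (neg_mem (subset_span ht))
  have := hTrank.trans (Submodule.finrank_mono hsub)
  omega

end LinHelly

/-- Helly-type theorem for the dimension of lineality spaces of conical hulls,
with bound `h(k,d) = max {d+1, 2(k+1)}`. -/
theorem lineality_helly (d k : ℕ) (hk1 : 1 ≤ k) (hkd : k ≤ d)
    (A : Finset (EuclideanSpace ℝ (Fin d)))
    (H : ∀ B ⊆ A, B.card ≤ max (d + 1) (2 * (k + 1)) →
      Module.finrank ℝ (Submodule.span ℝ (linealitySet (B : Set (EuclideanSpace ℝ (Fin d))))) ≤ k) :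
    Module.finrank ℝ (Submodule.span ℝ (linealitySet (A : Set (EuclideanSpace ℝ (Fin d))))) ≤ k :=
  LinHelly.lineality_helly' d k hk1 hkd A H
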